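/- Let G be a topological group, H a dense subgroup of G, and X a metric space equipped with an action of H by isometries. Assume that for every x ∈ X the stabilizer {h ∈ H : h·x = x} is an open subgroup of H in the subspace topology induced from G. Then the H-action extends to an action of G on X by isometries in which the stabilizer in G of every point of X is an open subgroup of G; moreover such an extension is unique. -/

import Mathlib

open Pointwise

/-- Extension of an isometric action of a dense subgroup `H` of a topological
group `G` on a metric space `X`, assuming all point stabilizers in `H` are open
(in the subspace topology induced from `G`), to an isometric action of `G` with
open point stabilizers; such an extension is unique. -/
theorem denseSubgroup_isometricAction_extension
    {G : Type*} [Group G] [TopologicalSpace G] [IsTopologicalGroup G]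
    (H : Subgroup G) (hdense : Dense (H : Set G))
    {X : Type*} [MetricSpace X]
    (φ : H →* (X ≃ᵢ X))
    (hstab : ∀ x : X, IsOpen {h : H | φ h x = x}) :
    ∃! ψ : G →* (X ≃ᵢ X),
      (∀ h : H, ψ (h : G) = φ h) ∧ (∀ x : X, IsOpen {g : G | ψ g x = x}) := by
  classical
  -- For each x, find an open neighborhood W of 1 in G such that any two elements of H
  -- in the same translate of W act the same way on x.
  have key : ∀ x : X, ∃ W : Set G, IsOpen W ∧ (1:G) ∈ W ∧
      ∀ (a : G) (h h' : H), a⁻¹ * (h:G) ∈ W → a⁻¹ * (h':G) ∈ W → φ h x = φ h' x := by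
    intro x
    obtain ⟨U, hUo, hUeq⟩ := isOpen_induced_iff.mp (hstab x)
    have hU1 : (1:G) ∈ U := by
      have h1 : (1:H) ∈ {h : H | φ h x = x} := by simp
      rw [← hUeq] at h1; exact h1
    have hUstab : ∀ h : H, (h:G) ∈ U → φ h x = x := by
      intro h hh
      have : h ∈ ((↑) ⁻¹' U : Set H) := hh
      rw [hUeq] at this; exact this
    obtain ⟨V, hVo, hV1, hVU⟩ := exists_open_nhds_one_mul_subset (hUo.mem_nhds hU1)
    refine ⟨V ∩ V⁻¹, hVo.inter (hVo.preimage continuous_inv), ⟨hV1, by simp [hV1]⟩, ?_⟩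
    intro a h h' hh hh'
    have hmem : ((h⁻¹ * h' : H) : G) ∈ U := by
      have hrw : ((h:G)⁻¹ * (h':G)) = (a⁻¹ * (h:G))⁻¹ * (a⁻¹ * (h':G)) := by group
      push_cast
      rw [hrw]
      have hi : (a⁻¹ * (h:G))⁻¹ ∈ V := Set.mem_inv.mp hh.2
      exact hVU (Set.mul_mem_mul hi hh'.1)
    have hfix : φ (h⁻¹ * h') x = x := hUstab _ hmem
    have e : h * (h⁻¹ * h') = h' := by group
    calc φ h x = φ h (φ (h⁻¹ * h') x) := by rw [hfix]
      _ = φ (h * (h⁻¹ * h')) x := by rw [map_mul φ h]; rfl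
      _ = φ h' x := by rw [e]
  choose W hWo hW1 hWkey using key
  -- density: find elements of H in any translate of an open nbhd of 1
  have hexH : ∀ (g : G) (V : Set G), IsOpen V → (1:G) ∈ V → ∃ h : H, g⁻¹ * (h:G) ∈ V := by
    intro g V hVo hV1
    have hopen : IsOpen {a : G | g⁻¹ * a ∈ V} := hVo.preimage (continuous_const.mul continuous_id)
    have hne : {a : G | g⁻¹ * a ∈ V}.Nonempty := ⟨g, by simp [hV1]⟩
    obtain ⟨a, haH, haV⟩ := hdense.exists_mem_open hopen hne
    exact ⟨⟨a, haH⟩, haV⟩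
  have hpick : ∀ (g : G) (x : X), ∃ h : H, g⁻¹ * (h:G) ∈ W x :=
    fun g x => hexH g (W x) (hWo x) (hW1 x)
  choose pick hpickW using hpick
  set act : G → X → X := fun g x => φ (pick g x) x with hactdef
  have spec : ∀ (g : G) (x : X) (h : H), g⁻¹ * (h:G) ∈ W x → act g x = φ h x :=
    fun g x h hh => hWkey x g _ h (hpickW g x) hh
  have hH : ∀ (h : H) (x : X), act (h:G) x = φ h x := by
    intro h x
    refine spec _ x h ?_
    rw [inv_mul_cancel]; exact hW1 x
  have hdist : ∀ (g : G) (x y : X), dist (act g x) (act g y) = dist x y := by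
    intro g x y
    obtain ⟨h, hh⟩ := hexH g (W x ∩ W y) ((hWo x).inter (hWo y)) ⟨hW1 x, hW1 y⟩
    rw [spec g x h hh.1, spec g y h hh.2]
    exact (φ h).dist_eq x y
  have hmul : ∀ (a b : G) (x : X), act (a * b) x = act a (act b x) := by
    intro a b x
    obtain ⟨hb, hhb⟩ := hexH b (W x) (hWo x) (hW1 x)
    have hyb : act b x = φ hb x := spec b x hb hhb
    have hVo : IsOpen (W (act b x) ∩ {v : G | b⁻¹ * v * (hb:G) ∈ W x}) := by
      refine (hWo _).inter ((hWo x).preimage ?_)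
      exact (continuous_const.mul continuous_id).mul continuous_const
    have hV1 : (1:G) ∈ W (act b x) ∩ {v : G | b⁻¹ * v * (hb:G) ∈ W x} :=
      ⟨hW1 _, by simpa using hhb⟩
    obtain ⟨ha, hha⟩ := hexH a _ hVo hV1
    have h1 : act a (act b x) = φ ha (act b x) := spec a _ ha hha.1
    have h2 : act (a * b) x = φ (ha * hb) x := by
      refine spec _ x (ha * hb) ?_
      have hrw : (a * b)⁻¹ * ((ha * hb : H) : G) = b⁻¹ * (a⁻¹ * (ha:G)) * (hb:G) := by
        push_cast; group
      rw [hrw]; exact hha.2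
    rw [h2, h1, hyb, map_mul]
    rfl
  have hone : ∀ x : X, act 1 x = x := by
    intro x
    have : act ((1:H):G) x = φ 1 x := hH 1 x
    simpa using this
  -- the extension
  set Ψ : G → (X ≃ᵢ X) := fun g =>
    IsometryEquiv.mk
      ⟨act g, act g⁻¹,
        fun x => by rw [← hmul, inv_mul_cancel, hone],
        fun x => by rw [← hmul, mul_inv_cancel, hone]⟩
      (Isometry.of_dist_eq (hdist g)) with hΨdef
  set ψ : G →* (X ≃ᵢ X) := MonoidHom.mk' Ψ
    (fun a b => IsometryEquiv.ext fun x => hmul a b x) with hψdef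
  have hψact : ∀ (g : G) (x : X), ψ g x = act g x := fun g x => rfl
  refine ⟨ψ, ⟨fun h => IsometryEquiv.ext fun x => hH h x, ?_⟩, ?_⟩
  · -- open stabilizers in G
    intro x
    rw [isOpen_iff_forall_mem_open]
    intro g hg
    have hgx : act g x = x := hg
    obtain ⟨V, hVo, hV1, hVV⟩ := exists_open_nhds_one_mul_subset ((hWo x).mem_nhds (hW1 x))
    refine ⟨{a : G | g⁻¹ * a ∈ V ∩ W x}, ?_, ?_, ?_⟩
    · intro g' hg'
      obtain ⟨h, hh⟩ := hexH g' (V ∩ W x) (hVo.inter (hWo x)) ⟨hV1, hW1 x⟩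
      have h1 : act g' x = φ h x := spec g' x h hh.2
      have h2 : g⁻¹ * (h:G) ∈ W x := by
        have hrw : g⁻¹ * (h:G) = (g⁻¹ * g') * (g'⁻¹ * (h:G)) := by group
        rw [hrw]
        exact hVV (Set.mul_mem_mul hg'.1 hh.1)
      have h3 : act g x = φ h x := spec g x h h2
      show ψ g' x = x
      rw [hψact, h1, ← h3, hgx]
    · exact (hVo.inter (hWo x)).preimage (continuous_const.mul continuous_id)
    · simp [hV1, hW1 x]
  · -- uniqueness
    rintro ψ' ⟨hψ'H, hψ'open⟩
    refine MonoidHom.ext fun g => IsometryEquiv.ext fun x => ?_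
    have happ : ∀ (u v : G) (y : X), ψ' (u * v) y = ψ' u (ψ' v y) := by
      intro u v y; rw [map_mul]; rfl
    have hAopen : IsOpen {v : G | ψ' (g * v) x = ψ' g x} := by
      have heq : {v : G | ψ' (g * v) x = ψ' g x} = (fun v => g * v) ⁻¹' {a : G | ψ' a x = x} →
        True := fun _ => trivial
      have : {v : G | ψ' (g * v) x = ψ' g x} = (g * ·) ⁻¹' {a : G | ψ' a x = ψ' g x} := rfl
      rw [this]
      have h2 : {a : G | ψ' a x = ψ' g x} = (g⁻¹ * ·) ⁻¹' {a : G | ψ' a x = x} := by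
        ext a
        simp only [Set.mem_setOf_eq, Set.mem_preimage]
        constructor
        · intro hax
          rw [happ g⁻¹ a x, hax, ← happ, inv_mul_cancel, map_one]
          rfl
        · intro hax
          have := congrArg (ψ' g) hax
          rw [← happ] at this
          simpa using this
      rw [h2]
      exact ((hψ'open x).preimage (continuous_const.mul continuous_id)).preimage
        (continuous_const.mul continuous_id)
    have hA1 : (1:G) ∈ {v : G | ψ' (g * v) x = ψ' g x} := by simp
    obtain ⟨h, hh⟩ := hexH g ({v : G | ψ' (g * v) x = ψ' g x} ∩ W x)
      (hAopen.inter (hWo x)) ⟨hA1, hW1 x⟩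
    have h1 : ψ' (g * (g⁻¹ * (h:G))) x = ψ' g x := hh.1
    rw [show g * (g⁻¹ * (h:G)) = (h:G) by group] at h1
    have h2 : act g x = φ h x := spec g x h hh.2
    rw [hψact, h2, ← h1, hψ'H h]
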